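/- For all nonnegative integers m and n, the sum over k from 0 to floor(n/4) of C(m+k, k) * C(m+1, n-4k) equals the sum over k from 0 to floor(n/2) of (-1)^k * C(m+k, k) * C(m+n-2k, m). -/

import Mathlib

open Finset

noncomputable def Fser (c : ℤ) (d m : ℕ) : PowerSeries ℤ :=
  PowerSeries.mk fun n => if d ∣ n then c ^ (n / d) * ((m + n / d).choose (n / d) : ℤ) else 0

lemma Fser_step (c : ℤ) (d m : ℕ) (hd : 0 < d) :
    (1 - PowerSeries.C c * PowerSeries.X ^ d) * Fser c d (m + 1) = Fser c d m := by
  ext n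
  rw [sub_mul, one_mul, mul_assoc, map_sub, PowerSeries.coeff_C_mul,
    PowerSeries.coeff_X_pow_mul']
  simp only [Fser, PowerSeries.coeff_mk]
  by_cases hdvd : d ∣ n
  · obtain ⟨q, rfl⟩ := hdvd
    cases q with
    | zero => simp [Nat.not_le.2 hd]
    | succ q =>
      have hdvd1 : d ∣ d * (q + 1) := ⟨q + 1, rfl⟩
      have hdvd2 : d ∣ d * q := ⟨q, rfl⟩
      have hle : d ≤ d * (q + 1) := Nat.le_mul_of_pos_right d (Nat.succ_pos q)
      have h1 : d * (q + 1) - d = d * q := by rw [Nat.mul_succ, Nat.add_sub_cancel]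
      rw [h1, if_pos hdvd1, if_pos hle, if_pos hdvd2, if_pos hdvd1,
        Nat.mul_div_cancel_left _ hd, Nat.mul_div_cancel_left _ hd]
      have h2 : (m + 1 + (q + 1)).choose (q + 1)
          = (m + q + 1).choose q + (m + q + 1).choose (q + 1) := by
        rw [show m + 1 + (q + 1) = m + q + 1 + 1 by ring]
        exact Nat.choose_succ_succ (m + q + 1) q
      rw [h2, show m + 1 + q = m + q + 1 by ring]
      push_cast
      ring
  · rw [if_neg hdvd, if_neg hdvd]
    split_ifs with hle hdvd2
    · exfalso
      have := Nat.dvd_add hdvd2 (dvd_refl d)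
      rw [Nat.sub_add_cancel hle] at this
      exact hdvd this
    · simp
    · simp

lemma Fser_base (c : ℤ) (d : ℕ) (hd : 0 < d) :
    (1 - PowerSeries.C c * PowerSeries.X ^ d) * Fser c d 0 = 1 := by
  ext n
  rw [sub_mul, one_mul, mul_assoc, map_sub, PowerSeries.coeff_C_mul,
    PowerSeries.coeff_X_pow_mul', PowerSeries.coeff_one]
  simp only [Fser, PowerSeries.coeff_mk, Nat.zero_add, Nat.choose_self, Nat.cast_one, mul_one,
    zero_add]
  by_cases hdvd : d ∣ n
  · obtain ⟨q, rfl⟩ := hdvd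
    cases q with
    | zero => simp [Nat.not_le.2 hd]
    | succ q =>
      have hdvd1 : d ∣ d * (q + 1) := ⟨q + 1, rfl⟩
      have hdvd2 : d ∣ d * q := ⟨q, rfl⟩
      have hle : d ≤ d * (q + 1) := Nat.le_mul_of_pos_right d (Nat.succ_pos q)
      have h1 : d * (q + 1) - d = d * q := by rw [Nat.mul_succ, Nat.add_sub_cancel]
      rw [h1, if_pos hdvd1, if_pos hle, if_pos hdvd2,
        if_neg (Nat.mul_pos hd q.succ_pos).ne',
        Nat.mul_div_cancel_left _ hd, Nat.mul_div_cancel_left _ hd]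
      ring
  · rw [if_neg hdvd]
    have hn0 : n ≠ 0 := fun h => hdvd (h ▸ dvd_zero d)
    rw [if_neg hn0]
    split_ifs with hle hdvd2
    · exfalso
      have := Nat.dvd_add hdvd2 (dvd_refl d)
      rw [Nat.sub_add_cancel hle] at this
      exact hdvd this
    · simp
    · simp

lemma Fser_inv (c : ℤ) (d m : ℕ) (hd : 0 < d) :
    (1 - PowerSeries.C c * PowerSeries.X ^ d) ^ (m + 1) * Fser c d m = 1 := by
  induction m with
  | zero => rw [pow_one]; exact Fser_base c d hd
  | succ m ih => rw [pow_succ, mul_assoc, Fser_step c d m hd, ih]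

lemma sum_dvd_reindex (d n : ℕ) (hd : 0 < d) (f : ℕ → ℤ) :
    ∑ j ∈ range (n + 1), (if d ∣ j then f j else 0) = ∑ k ∈ range (n / d + 1), f (d * k) := by
  rw [← Finset.sum_filter]
  have himg : (range (n + 1)).filter (fun j => d ∣ j)
      = (range (n / d + 1)).image (fun k => d * k) := by
    ext j
    simp only [mem_filter, mem_range, mem_image, Nat.lt_succ_iff]
    constructor
    · rintro ⟨hj, q, rfl⟩
      exact ⟨q, (Nat.le_div_iff_mul_le hd).2 (by rw [mul_comm]; exact hj), rfl⟩
    · rintro ⟨q, hq, rfl⟩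
      refine ⟨?_, ⟨q, rfl⟩⟩
      calc d * q ≤ d * (n / d) := Nat.mul_le_mul_left d hq
        _ ≤ n := Nat.mul_div_le n d
  rw [himg, Finset.sum_image (fun a _ b _ h => Nat.eq_of_mul_eq_mul_left hd h)]

lemma coeff_one_add_X_pow' (N j : ℕ) :
    PowerSeries.coeff (R := ℤ) j ((1 + PowerSeries.X) ^ N) = N.choose j := by
  have h : (((1 + Polynomial.X : Polynomial ℤ) ^ N : Polynomial ℤ) : PowerSeries ℤ)
      = (1 + PowerSeries.X) ^ N := by
    rw [Polynomial.coe_pow, Polynomial.coe_add, Polynomial.coe_one, Polynomial.coe_X]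
  rw [← h, Polynomial.coeff_coe, Polynomial.coeff_one_add_X_pow]

theorem sun_identity_new2 (m n : ℕ) :
    ∑ k ∈ range (n / 4 + 1),
      ((m + k).choose k * (m + 1).choose (n - 4 * k) : ℤ) =
    ∑ k ∈ range (n / 2 + 1),
      (-1 : ℤ) ^ k * (m + k).choose k * (m + n - 2 * k).choose m := by
  have h1 : ((1 : PowerSeries ℤ) - PowerSeries.X) ^ (m + 1) * Fser 1 1 m = 1 := by
    simpa using Fser_inv 1 1 m one_pos
  have h2 : ((1 : PowerSeries ℤ) + PowerSeries.X ^ 2) ^ (m + 1) * Fser (-1) 2 m = 1 := by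
    have := Fser_inv (-1) 2 m two_pos
    rw [map_neg, map_one, neg_mul, sub_neg_eq_add, one_mul] at this
    exact this
  have h4 : ((1 : PowerSeries ℤ) - PowerSeries.X ^ 4) ^ (m + 1) * Fser 1 4 m = 1 := by
    simpa using Fser_inv 1 4 m four_pos
  have hP : (((1 : PowerSeries ℤ) - PowerSeries.X) * (1 + PowerSeries.X ^ 2)) ^ (m + 1) ≠ 0 := by
    intro h
    have := congrArg (PowerSeries.constantCoeff) h
    simp at this
  have hA : (((1 : PowerSeries ℤ) - PowerSeries.X) * (1 + PowerSeries.X ^ 2)) ^ (m + 1)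
      * (Fser 1 4 m * (1 + PowerSeries.X) ^ (m + 1)) = 1 := by
    have hfact : (((1 : PowerSeries ℤ) - PowerSeries.X) * (1 + PowerSeries.X ^ 2)) ^ (m + 1) * (1 + PowerSeries.X) ^ (m + 1)
        = (1 - PowerSeries.X ^ 4) ^ (m + 1) := by
      rw [← mul_pow]; congr 1; ring
    calc (((1 : PowerSeries ℤ) - PowerSeries.X) * (1 + PowerSeries.X ^ 2)) ^ (m + 1) * (Fser 1 4 m * (1 + PowerSeries.X) ^ (m + 1))
        = ((((1 : PowerSeries ℤ) - PowerSeries.X) * (1 + PowerSeries.X ^ 2)) ^ (m + 1) * (1 + PowerSeries.X) ^ (m + 1))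
          * Fser 1 4 m := by ring
      _ = 1 := by rw [hfact, h4]
  have hB : (((1 : PowerSeries ℤ) - PowerSeries.X) * (1 + PowerSeries.X ^ 2)) ^ (m + 1)
      * (Fser (-1) 2 m * Fser 1 1 m) = 1 := by
    calc (((1 : PowerSeries ℤ) - PowerSeries.X) * (1 + PowerSeries.X ^ 2)) ^ (m + 1) * (Fser (-1) 2 m * Fser 1 1 m)
        = (((1 : PowerSeries ℤ) - PowerSeries.X) ^ (m + 1) * Fser 1 1 m)
          * (((1 : PowerSeries ℤ) + PowerSeries.X ^ 2) ^ (m + 1) * Fser (-1) 2 m) := by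
          rw [mul_pow]; ring
      _ = 1 := by rw [h1, h2, one_mul]
  have key : Fser 1 4 m * (1 + PowerSeries.X) ^ (m + 1) = Fser (-1) 2 m * Fser 1 1 m :=
    mul_left_cancel₀ hP (hA.trans hB.symm)
  have hL : PowerSeries.coeff n (Fser 1 4 m * (1 + PowerSeries.X) ^ (m + 1))
      = ∑ k ∈ range (n / 4 + 1), ((m + k).choose k * (m + 1).choose (n - 4 * k) : ℤ) := by
    rw [PowerSeries.coeff_mul, Finset.Nat.sum_antidiagonal_eq_sum_range_succ_mk]
    simp only [Fser, PowerSeries.coeff_mk, coeff_one_add_X_pow', one_pow, one_mul, ite_mul,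
      zero_mul, Nat.succ_eq_add_one]
    rw [sum_dvd_reindex 4 n (by norm_num)
      (fun j => ((m + j / 4).choose (j / 4) : ℤ) * ((m + 1).choose (n - j) : ℤ))]
    refine Finset.sum_congr rfl fun k _ => ?_
    rw [Nat.mul_div_cancel_left k (by norm_num)]
  have hR : PowerSeries.coeff n (Fser (-1) 2 m * Fser 1 1 m)
      = ∑ k ∈ range (n / 2 + 1),
        (-1 : ℤ) ^ k * (m + k).choose k * (m + n - 2 * k).choose m := by
    rw [PowerSeries.coeff_mul, Finset.Nat.sum_antidiagonal_eq_sum_range_succ_mk]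
    simp only [Fser, PowerSeries.coeff_mk, one_dvd, if_true, Nat.div_one, one_pow, one_mul,
      ite_mul, zero_mul]
    rw [sum_dvd_reindex 2 n (by norm_num)
      (fun j => (-1 : ℤ) ^ (j / 2) * ((m + j / 2).choose (j / 2) : ℤ)
        * ((m + (n - j)).choose (n - j) : ℤ))]
    refine Finset.sum_congr rfl fun k hk => ?_
    rw [Nat.mul_div_cancel_left k (by norm_num)]
    rw [mem_range, Nat.lt_succ_iff] at hk
    have hk2 : 2 * k ≤ n := by omega
    have he : m + (n - 2 * k) = m + n - 2 * k := by omega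
    have h5 : (m + (n - 2 * k)).choose (n - 2 * k) = (m + n - 2 * k).choose m := by
      rw [← he]
      exact Nat.choose_symm_add.symm
    rw [h5]
  rw [← hL, ← hR, key]
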